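/- Let n ≥ 1, let ε > 0, and let P be a polynomial path of degree n with a P-root-path set {γ_1, ..., γ_n}. Then there exists a polynomial path P' of degree n such that P'_α has n distinct roots for every α ∈ [0,1], together with a P'-root-path set {γ'_1, ..., γ'_n}, satisfying ‖P_α − P'_α‖ < ε and |γ_j(α) − γ'_j(α)| < ε for all α ∈ [0,1] and all j = 1, ..., n. -/

import Mathlib

open Polynomial Set

def IsPolyPath (n : ℕ) (P : ℝ → Polynomial ℂ) : Prop :=
  (∀ α ∈ Set.Icc (0 : ℝ) 1, (P α).Monic ∧ (P α).natDegree = n) ∧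
  ∀ k : ℕ, ContinuousOn (fun α => (P α).coeff k) (Set.Icc 0 1)

def IsRootPathSet (n : ℕ) (P : ℝ → Polynomial ℂ) (γ : Fin n → ℝ → ℂ) : Prop :=
  (∀ j, ContinuousOn (γ j) (Set.Icc 0 1)) ∧
  ∀ α ∈ Set.Icc (0 : ℝ) 1, (Finset.univ.val.map fun j => γ j α) = (P α).roots

lemma contDiff_eval (p : ℝ[X]) : ContDiff ℝ 1 fun x : ℝ => p.eval x := by
  have : (fun x : ℝ => p.eval x) = fun x => ∑ i ∈ Finset.range (p.natDegree + 1), p.coeff i * x ^ i := by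
    funext x; rw [Polynomial.eval_eq_sum_range]
  rw [this]
  exact ContDiff.sum fun i _ => contDiff_const.mul (contDiff_id.pow i)

lemma cont_coeff_prod (n : ℕ) (t : Finset (Fin n)) (k : ℕ) :
    Continuous fun z : Fin n → ℂ => (∏ j ∈ t, (X - C (z j))).coeff k := by
  induction t using Finset.induction_on generalizing k with
  | empty => simpa [Polynomial.coeff_one] using continuous_const
  | @insert a t ha ih =>
    have : (fun z : Fin n → ℂ => (∏ j ∈ insert a t, (X - C (z j))).coeff k)
        = fun z => ∑ x ∈ Finset.HasAntidiagonal.antidiagonal k,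
            ((X - C (z a)).coeff x.1) * ((∏ j ∈ t, (X - C (z j))).coeff x.2) := by
      funext z; rw [Finset.prod_insert ha, Polynomial.coeff_mul]
    rw [this]
    refine continuous_finset_sum _ fun x _ => Continuous.mul ?_ (ih x.2)
    have : (fun z : Fin n → ℂ => ((X - C (z a)).coeff x.1))
        = fun z => (if x.1 = 1 then (1:ℂ) else 0) - (if x.1 = 0 then z a else 0) := by
      funext z
      simp [Polynomial.coeff_sub, Polynomial.coeff_X, Polynomial.coeff_C, eq_comm]
    rw [this]
    refine continuous_const.sub ?_
    split_ifs
    · exact continuous_apply a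
    · exact continuous_const

theorem exists_close_polypath_with_distinct_roots
    (n : ℕ) (hn : 1 ≤ n) (ε : ℝ) (hε : 0 < ε)
    (P : ℝ → Polynomial ℂ) (hP : IsPolyPath n P)
    (γ : Fin n → ℝ → ℂ) (hγ : IsRootPathSet n P γ) :
    ∃ P' : ℝ → Polynomial ℂ, IsPolyPath n P' ∧
      (∀ α ∈ Set.Icc (0 : ℝ) 1, (P' α).roots.toFinset.card = n) ∧
      ∃ γ' : Fin n → ℝ → ℂ, IsRootPathSet n P' γ' ∧
        (∀ α ∈ Set.Icc (0 : ℝ) 1, ∀ k, ‖(P α).coeff k - (P' α).coeff k‖ < ε) ∧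
        (∀ α ∈ Set.Icc (0 : ℝ) 1, ∀ j, ‖γ j α - γ' j α‖ < ε) := by
  -- bound on the roots
  have hfc : ContinuousOn (fun α (j : Fin n) => γ j α) (Set.Icc (0:ℝ) 1) :=
    continuousOn_pi.2 hγ.1
  obtain ⟨M0, hM0⟩ := isCompact_Icc.exists_bound_of_continuousOn hfc
  set M : ℝ := max M0 0 with hMdef
  have hM0M : M0 ≤ M := le_max_left _ _
  have hMnn : 0 ≤ M := le_max_right _ _
  -- uniform continuity of the coefficient map
  set Fn : (Fin n → ℂ) → (Fin (n+1) → ℂ) :=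
    fun z k => (∏ j, (X - C (z j))).coeff (k : ℕ) with hFndef
  have hFnc : Continuous Fn := continuous_pi fun k => cont_coeff_prod n Finset.univ k
  have hUC := ((isCompact_closedBall (0 : Fin n → ℂ) (M+1)).uniformContinuousOn_of_continuous
    hFnc.continuousOn)
  rw [Metric.uniformContinuousOn_iff] at hUC
  obtain ⟨δ₀, hδ₀pos, hδ₀⟩ := hUC ε hε
  set δ : ℝ := min (min δ₀ ε) 1 with hδdef
  have hδpos : 0 < δ := by
    simp only [hδdef, lt_min_iff]
    exact ⟨⟨hδ₀pos, hε⟩, one_pos⟩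
  have hδδ₀ : δ ≤ δ₀ := (min_le_left _ _).trans (min_le_left _ _)
  have hδε : δ ≤ ε := (min_le_left _ _).trans (min_le_right _ _)
  have hδ1 : δ ≤ 1 := min_le_right _ _
  -- Weierstrass approximation of real and imaginary parts
  have hWre : ∀ j : Fin n, ∃ p : ℝ[X], ∀ x ∈ Set.Icc (0:ℝ) 1, |p.eval x - (γ j x).re| < δ/4 :=
    fun j => exists_polynomial_near_of_continuousOn 0 1 _
      (Complex.continuous_re.comp_continuousOn (hγ.1 j)) (δ/4) (by positivity)
  have hWim : ∀ j : Fin n, ∃ p : ℝ[X], ∀ x ∈ Set.Icc (0:ℝ) 1, |p.eval x - (γ j x).im| < δ/4 :=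
    fun j => exists_polynomial_near_of_continuousOn 0 1 _
      (Complex.continuous_im.comp_continuousOn (hγ.1 j)) (δ/4) (by positivity)
  choose u hu using hWre
  choose v hv using hWim
  set g : Fin n → ℝ → ℂ := fun j α => Complex.ofReal ((u j).eval α) + Complex.ofReal ((v j).eval α) * Complex.I
    with hgdef
  have hgcd : ∀ j, ContDiff ℝ 1 (g j) := by
    intro j
    exact (Complex.ofRealCLM.contDiff.comp (contDiff_eval (u j))).add
      ((Complex.ofRealCLM.contDiff.comp (contDiff_eval (v j))).mul contDiff_const)
  have hgγ : ∀ α ∈ Set.Icc (0:ℝ) 1, ∀ j, ‖γ j α - g j α‖ < δ/2 := by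
    intro α hα j
    have h1 : (γ j α - g j α).re = (γ j α).re - (u j).eval α := by
      simp [hgdef, Complex.sub_re, Complex.add_re, Complex.mul_re]
    have h2 : (γ j α - g j α).im = (γ j α).im - (v j).eval α := by
      simp [hgdef, Complex.sub_im, Complex.add_im, Complex.mul_im]
    calc ‖γ j α - g j α‖ ≤ |(γ j α - g j α).re| + |(γ j α - g j α).im| :=
          Complex.norm_le_abs_re_add_abs_im _
    _ < δ/4 + δ/4 := by
        rw [h1, h2]
        gcongr
        · rw [abs_sub_comm]; exact hu j α hα
        · rw [abs_sub_comm]; exact hv j α hα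
    _ = δ/2 := by ring
  -- choose a generic constant c avoiding finitely many C¹ curves
  set hfun : (Fin n × Fin n) → ℝ → ℂ :=
    fun p α => (g p.2 α - g p.1 α) / (((p.1 : ℕ) : ℂ) - ((p.2 : ℕ) : ℂ)) with hfundef
  have hfcd : ∀ p, ContDiff ℝ 1 (hfun p) :=
    fun p => ((hgcd p.2).sub (hgcd p.1)).div_const _
  have hdim : dimH (Set.Icc (0:ℝ) 1) < (Module.finrank ℝ ℂ : ENNReal) := by
    have h1 : dimH (Set.Icc (0:ℝ) 1) ≤ 1 := by
      have := dimH_mono (subset_univ (Set.Icc (0:ℝ) 1))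
      rwa [Real.dimH_univ] at this
    rw [Complex.finrank_real_complex]
    exact h1.trans_lt (by norm_num)
  have hdense : ∀ p : Fin n × Fin n, Dense ((hfun p '' Set.Icc 0 1)ᶜ) := by
    intro p
    exact (hfcd p).contDiffOn.dense_compl_image_of_dimH_lt_finrank convex_univ
      (subset_univ _) hdim
  have hopen : ∀ p : Fin n × Fin n, IsOpen ((hfun p '' Set.Icc 0 1)ᶜ) := by
    intro p
    exact (isCompact_Icc.image (hfcd p).continuous).isClosed.isOpen_compl
  have hUdense : Dense (⋂ p : Fin n × Fin n, (hfun p '' Set.Icc 0 1)ᶜ) :=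
    dense_iInter_of_isOpen hopen hdense
  have hballpos : (0:ℝ) < δ / (2*n) := by positivity
  obtain ⟨c, hcU, hcball⟩ := hUdense.exists_mem_open Metric.isOpen_ball
    ⟨0, Metric.mem_ball_self hballpos⟩
  have hcabs : ‖c‖ < δ / (2*n) := by
    simpa [Complex.dist_eq] using hcball
  have hcavoid : ∀ p : Fin n × Fin n, ∀ α ∈ Set.Icc (0:ℝ) 1, c ≠ hfun p α := by
    intro p α hα h
    have := Set.mem_iInter.1 hcU p
    exact this ⟨α, hα, h.symm⟩
  -- the perturbed root paths
  set γ' : Fin n → ℝ → ℂ := fun j α => g j α + ((j : ℕ) : ℂ) * c with hγ'def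
  have hγ'c : ∀ j, Continuous (γ' j) := fun j => ((hgcd j).continuous).add continuous_const
  -- injectivity at each α
  have hinj : ∀ α ∈ Set.Icc (0:ℝ) 1, Function.Injective fun j => γ' j α := by
    intro α hα j k h
    by_contra hne
    have hjk : ((j : ℕ) : ℂ) ≠ ((k : ℕ) : ℂ) := by
      exact_mod_cast fun hh => hne (Fin.val_injective (Nat.cast_injective hh))
    apply hcavoid (j, k) α hα
    have h' : g j α + ((j : ℕ) : ℂ) * c = g k α + ((k : ℕ) : ℂ) * c := h
    rw [hfundef]
    rw [eq_div_iff (sub_ne_zero.2 hjk)]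
    linear_combination h'
  -- closeness of the root paths
  have hclose : ∀ α ∈ Set.Icc (0:ℝ) 1, ∀ j, ‖γ j α - γ' j α‖ < δ := by
    intro α hα j
    have h1 : γ j α - γ' j α = (γ j α - g j α) - ((j : ℕ) : ℂ) * c := by
      rw [hγ'def]; ring
    rw [h1]
    calc ‖(γ j α - g j α) - ((j : ℕ) : ℂ) * c‖
        ≤ ‖γ j α - g j α‖ + ‖((j : ℕ) : ℂ) * c‖ :=
          (norm_sub_le _ _)
    _ < δ/2 + δ/2 := by
        gcongr
        · exact hgγ α hα j
        · rw [norm_mul, Complex.norm_natCast]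
          calc (j : ℝ) * ‖c‖ ≤ n * ‖c‖ := by
                gcongr
                exact_mod_cast (j.2.le)
          _ < n * (δ / (2*n)) := by
                have hn' : (0:ℝ) < n := by exact_mod_cast hn
                exact (mul_lt_mul_iff_right₀ hn').2 hcabs
          _ = δ/2 := by
                field_simp
    _ = δ := by ring
  -- P as a product over the root paths
  have hPeq : ∀ α ∈ Set.Icc (0:ℝ) 1, P α = ∏ j, (X - C (γ j α)) := by
    intro α hα
    have hm := (hP.1 α hα).1
    have hsp := (IsAlgClosed.splits (P α)).eq_prod_roots_of_monic hm
    rw [← hγ.2 α hα] at hsp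
    rw [hsp, Finset.prod_eq_multiset_prod, Multiset.map_map]
    rfl
  -- the perturbed polynomial path
  set P' : ℝ → Polynomial ℂ := fun α => ∏ j, (X - C (γ' j α)) with hP'def
  have hP'roots : ∀ α, (P' α).roots = Finset.univ.val.map fun j => γ' j α := by
    intro α
    show (∏ j, (X - C (γ' j α))).roots = _
    rw [Finset.prod_eq_multiset_prod]
    have hmm : (Multiset.map (fun j => X - C (γ' j α)) Finset.univ.val)
        = Multiset.map (fun a => X - C a) (Multiset.map (fun j => γ' j α) Finset.univ.val) := by
      rw [Multiset.map_map]; rfl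
    rw [hmm, roots_multiset_prod_X_sub_C]
  have hP'monic : ∀ α, (P' α).Monic :=
    fun α => monic_prod_of_monic _ _ fun j _ => monic_X_sub_C _
  have hP'deg : ∀ α, (P' α).natDegree = n := by
    intro α
    rw [show P' α = ∏ j, (X - C (γ' j α)) from rfl, Polynomial.natDegree_prod_of_monic _ _ fun j _ => monic_X_sub_C _]
    simp
  refine ⟨P', ⟨fun α hα => ⟨hP'monic α, hP'deg α⟩, fun k => ?_⟩, fun α hα => ?_, γ',
    ⟨fun j => (hγ'c j).continuousOn, fun α hα => (hP'roots α).symm⟩,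
    fun α hα k => ?_, fun α hα j => lt_of_lt_of_le (hclose α hα j) hδε⟩
  · -- continuity of coefficients of P'
    exact ((cont_coeff_prod n Finset.univ k).comp (continuous_pi hγ'c)).continuousOn
  · -- n distinct roots
    rw [hP'roots α, Multiset.toFinset_card_of_nodup
      (Multiset.Nodup.map (hinj α hα) Finset.univ.nodup)]
    simp
  · -- coefficient bound
    by_cases hk : k < n + 1
    · have h1 : (P α).coeff k = Fn (fun j => γ j α) ⟨k, hk⟩ := by rw [hPeq α hα]
      have h2 : (P' α).coeff k = Fn (fun j => γ' j α) ⟨k, hk⟩ := rfl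
      rw [h1, h2]
      have hmem1 : (fun j => γ j α) ∈ Metric.closedBall (0 : Fin n → ℂ) (M+1) := by
        rw [Metric.mem_closedBall, dist_zero_right]
        calc ‖fun j => γ j α‖ ≤ M0 := hM0 α hα
        _ ≤ M + 1 := by linarith
      have hmem2 : (fun j => γ' j α) ∈ Metric.closedBall (0 : Fin n → ℂ) (M+1) := by
        rw [Metric.mem_closedBall, dist_zero_right]
        rw [pi_norm_le_iff_of_nonneg (by linarith : (0:ℝ) ≤ M + 1)]
        intro j
        calc ‖γ' j α‖ = ‖γ j α - (γ j α - γ' j α)‖ := by congr 1; ring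
        _ ≤ ‖γ j α‖ + ‖γ j α - γ' j α‖ := norm_sub_le _ _
        _ ≤ M + 1 := by
            have ha : ‖γ j α‖ ≤ M0 := le_trans (norm_le_pi_norm (fun j => γ j α) j) (hM0 α hα)
            have hb : ‖γ j α - γ' j α‖ ≤ 1 := le_trans (hclose α hα j).le hδ1
            linarith
      have hdist : dist (fun j => γ j α) (fun j => γ' j α) < δ₀ := by
        rw [dist_pi_lt_iff hδ₀pos]
        intro j
        rw [Complex.dist_eq]
        exact lt_of_lt_of_le (hclose α hα j) hδδ₀
      have hkey := hδ₀ _ hmem1 _ hmem2 hdist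
      calc ‖Fn (fun j => γ j α) ⟨k, hk⟩ - Fn (fun j => γ' j α) ⟨k, hk⟩‖
          = dist (Fn (fun j => γ j α) ⟨k, hk⟩) (Fn (fun j => γ' j α) ⟨k, hk⟩) :=
            (Complex.dist_eq _ _).symm
      _ ≤ dist (Fn (fun j => γ j α)) (Fn (fun j => γ' j α)) := dist_le_pi_dist _ _ _
      _ < ε := hkey
    · push_neg at hk
      have hk' : n < k := hk
      rw [Polynomial.coeff_eq_zero_of_natDegree_lt (by rw [(hP.1 α hα).2]; exact hk'),
          Polynomial.coeff_eq_zero_of_natDegree_lt (by rw [hP'deg α]; exact hk')]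
      simpa using hε
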